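/- Directional Lipschitz property at the non-Lipschitz point in the bi-objective example: the function f₂ : ℝ → ℝ defined by f₂(x) = cbrt(x) for x > 0 and f₂(x) = x² + x for x ≤ 0 is not Lipschitz continuous on any neighborhood of 0 (indeed ∂∞ f₂(0) = [0, +∞)), yet f₂ is directionally Lipschitzian at 0 with the unit vector u = −1. -/

import Mathlib

open Filter Topology Metric Set

/-- The Fréchet (regular) subdifferential of `f : ℝ → ℝ` at `x`:
`{v | liminf_{y → x} (f y − f x − v·(y − x))/|y − x| ≥ 0}`, written in the
equivalent ε-form. -/
def frechetSubR (f : ℝ → ℝ) (x : ℝ) : Set ℝ :=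
  {v | ∀ ε : ℝ, 0 < ε →
    ∀ᶠ y in 𝓝 x, f x + v * (y - x) - ε * |y - x| ≤ f y}

/-- The limiting (Mordukhovich) subdifferential of `f : ℝ → ℝ` at `x`. -/
def limitingSubR (f : ℝ → ℝ) (x : ℝ) : Set ℝ :=
  {v | ∃ xs vs : ℕ → ℝ,
    Tendsto xs atTop (𝓝 x) ∧
    Tendsto (fun k => f (xs k)) atTop (𝓝 (f x)) ∧
    (∀ k, vs k ∈ frechetSubR f (xs k)) ∧
    Tendsto vs atTop (𝓝 v)}

/-- The singular (horizon) subdifferential of `f : ℝ → ℝ` at `x`. -/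
def singularSubR (f : ℝ → ℝ) (x : ℝ) : Set ℝ :=
  {v | ∃ xs vs ls : ℕ → ℝ,
    Tendsto xs atTop (𝓝 x) ∧
    Tendsto (fun k => f (xs k)) atTop (𝓝 (f x)) ∧
    (∀ k, 0 < ls k) ∧ Tendsto ls atTop (𝓝 0) ∧
    (∀ k, vs k ∈ frechetSubR f (xs k)) ∧
    Tendsto (fun k => ls k * vs k) atTop (𝓝 v)}

/-- The real (odd) cube root: the unique `y` with `y³ = x`. -/
noncomputable def cbrt (x : ℝ) : ℝ :=
  if 0 ≤ x then x ^ ((1 : ℝ) / 3) else -((-x) ^ ((1 : ℝ) / 3))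

/-- The quantified directional Lipschitz estimate on the real line. -/
def DirLipBoundR (f : ℝ → ℝ) (xbar u L δ : ℝ) : Prop :=
  ∀ v z t : ℝ, |v - u| < δ → |z - xbar| < δ → |f z - f xbar| < δ →
    0 < t → t ≤ δ → f (z + t * v) - f z ≤ t * L

lemma cbrt_of_nonneg {x : ℝ} (hx : 0 ≤ x) : cbrt x = x ^ ((1:ℝ)/3) := if_pos hx

lemma f2_mono (f₂ : ℝ → ℝ)
    (hf₂ : ∀ x : ℝ, f₂ x = if 0 < x then cbrt x else x ^ 2 + x)
    {a b : ℝ} (ha : -(1/2 : ℝ) < a) (hab : a ≤ b) : f₂ a ≤ f₂ b := by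
  rw [hf₂ a, hf₂ b]
  by_cases ha0 : 0 < a
  · have hb0 : 0 < b := lt_of_lt_of_le ha0 hab
    rw [if_pos ha0, if_pos hb0, cbrt_of_nonneg ha0.le, cbrt_of_nonneg hb0.le]
    exact Real.rpow_le_rpow ha0.le hab (by norm_num)
  · rw [if_neg ha0]
    push_neg at ha0
    by_cases hb0 : 0 < b
    · rw [if_pos hb0, cbrt_of_nonneg hb0.le]
      have h1 : a ^ 2 + a ≤ 0 := by nlinarith
      have h2 : (0:ℝ) ≤ b ^ ((1:ℝ)/3) := Real.rpow_nonneg hb0.le _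
      linarith
    · rw [if_neg hb0]
      push_neg at hb0
      nlinarith

lemma hasDerivAt_mem_frechet {f : ℝ → ℝ} {d x : ℝ} (h : HasDerivAt f d x) :
    d ∈ frechetSubR f x := by
  intro ε hε
  have h' := (hasDerivAt_iff_isLittleO.1 h).bound hε
  filter_upwards [h'] with y hy
  have : |f y - f x - (y - x) * d| ≤ ε * |y - x| := by
    simpa [Real.norm_eq_abs, smul_eq_mul] using hy
  have := abs_le.1 this
  nlinarith [this.1, this.2]

lemma f2_hasDerivAt (f₂ : ℝ → ℝ)
    (hf₂ : ∀ x : ℝ, f₂ x = if 0 < x then cbrt x else x ^ 2 + x)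
    {x : ℝ} (hx : 0 < x) :
    HasDerivAt f₂ ((1/3 : ℝ) * x ^ ((1:ℝ)/3 - 1)) x := by
  have h := Real.hasDerivAt_rpow_const (x := x) (p := (1:ℝ)/3) (Or.inl hx.ne')
  refine h.congr_of_eventuallyEq ?_
  filter_upwards [Ioi_mem_nhds hx] with y hy
  rw [mem_Ioi] at hy
  rw [hf₂ y, if_pos hy, cbrt_of_nonneg (le_of_lt hy)]

lemma frechet_nonneg (f₂ : ℝ → ℝ)
    (hf₂ : ∀ x : ℝ, f₂ x = if 0 < x then cbrt x else x ^ 2 + x)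
    {x v : ℝ} (hx : |x| < 1/4) (hv : v ∈ frechetSubR f₂ x) : 0 ≤ v := by
  by_contra hneg
  push_neg at hneg
  have hε : (0:ℝ) < -v/2 := by linarith
  have h := hv (-v/2) hε
  have h2 : ∀ᶠ y in 𝓝 x, |y - x| < 1/8 := by
    have : Metric.ball x (1/8) ∈ 𝓝 x := Metric.ball_mem_nhds x (by norm_num)
    filter_upwards [this] with y hy
    simpa [Real.dist_eq] using hy
  have h3 : ∀ᶠ y in 𝓝[<] x, (f₂ x + v * (y - x) - (-v/2) * |y - x| ≤ f₂ y ∧ |y - x| < 1/8)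
      ∧ y ∈ Iio x :=
    (((h.and h2).filter_mono nhdsWithin_le_nhds).and eventually_mem_nhdsWithin)
  obtain ⟨y, ⟨hy1, hy2⟩, hy3⟩ := h3.exists
  rw [mem_Iio] at hy3
  have habs : |y - x| = x - y := by rw [abs_of_neg (by linarith)]; ring
  have hxb : |x| < 1/4 := hx
  have hyb : -(1/2 : ℝ) < y := by
    have := abs_lt.mp hx
    rw [habs] at hy2
    linarith
  have hmono : f₂ y ≤ f₂ x := f2_mono f₂ hf₂ hyb hy3.le
  rw [habs] at hy1
  nlinarith [hy1, hmono, hy3]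

/-- The function `f₂(x) = cbrt x` for `x > 0`, `f₂(x) = x² + x` for `x ≤ 0`, is
not Lipschitz on any neighborhood of `0` (indeed `∂∞ f₂(0) = [0, ∞)`), yet it
is directionally Lipschitzian at `0` with the unit vector `u = −1`. -/
theorem f2_directionallyLipschitz (f₂ : ℝ → ℝ)
    (hf₂ : ∀ x : ℝ, f₂ x = if 0 < x then cbrt x else x ^ 2 + x) :
    (¬ ∃ (K r : ℝ), 0 < r ∧ ∀ x ∈ ball (0 : ℝ) r, ∀ y ∈ ball (0 : ℝ) r,
      |f₂ x - f₂ y| ≤ K * |x - y|) ∧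
    singularSubR f₂ 0 = Ici (0 : ℝ) ∧
    (∃ L δ : ℝ, 0 < δ ∧ DirLipBoundR f₂ 0 (-1) L δ) := by
  have hf20 : f₂ 0 = 0 := by rw [hf₂ 0]; norm_num
  refine ⟨?_, ?_, ?_⟩
  · -- not Lipschitz
    rintro ⟨K, r, hr, H⟩
    set M := max K 1 with hM
    have hM1 : (1:ℝ) ≤ M := le_max_right _ _
    have hKM : K ≤ M := le_max_left _ _
    have hMpos : (0:ℝ) < M := by linarith
    set x := min (r/2) (((2*M)⁻¹) ^ (3:ℕ)) with hxdef
    have hx0 : 0 < x := lt_min (by linarith) (by positivity)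
    have hxr : x < r := lt_of_le_of_lt (min_le_left _ _) (by linarith)
    have hxball : x ∈ ball (0:ℝ) r := by
      simp [Real.dist_eq, abs_of_pos hx0, hxr]
    have h0ball : (0:ℝ) ∈ ball (0:ℝ) r := by simp [hr]
    have hineq := H x hxball 0 h0ball
    rw [hf20, hf₂ x, if_pos hx0, cbrt_of_nonneg hx0.le] at hineq
    set c := x ^ ((1:ℝ)/3) with hcdef
    have hcpos : 0 < c := Real.rpow_pos_of_pos hx0 _
    have hc3 : c ^ (3:ℕ) = x := by
      rw [hcdef, ← Real.rpow_natCast (x ^ ((1:ℝ)/3)) 3, ← Real.rpow_mul hx0.le]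
      norm_num
    have hcle : c ≤ (2*M)⁻¹ := by
      have h1 : x ≤ ((2*M)⁻¹) ^ (3:ℕ) := min_le_right _ _
      have h2 : c ≤ (((2*M)⁻¹) ^ (3:ℕ)) ^ ((1:ℝ)/3) :=
        Real.rpow_le_rpow hx0.le h1 (by norm_num)
      have h3 : (((2*M)⁻¹) ^ (3:ℕ)) ^ ((1:ℝ)/3) = (2*M)⁻¹ := by
        rw [← Real.rpow_natCast ((2*M)⁻¹) 3, ← Real.rpow_mul (by positivity)]
        norm_num
      linarith [h2, h3.le, h3.ge]
    have hcK : c ≤ K * x := by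
      have : |c - 0| ≤ K * |x - 0| := hineq
      rw [sub_zero, sub_zero, abs_of_pos hcpos, abs_of_pos hx0] at this
      exact this
    have hcM : c ≤ M * c ^ 3 := by
      calc c ≤ K * x := hcK
        _ ≤ M * x := by nlinarith
        _ = M * c ^ 3 := by rw [hc3]
    have hMc : M * c ≤ 1/2 := by
      have h := mul_le_mul_of_nonneg_left hcle hMpos.le
      have h2 : M * (2*M)⁻¹ = 1/2 := by field_simp
      linarith
    have h2M : (2*M)⁻¹ ≤ 1/2 := by
      have : (2:ℝ) ≤ 2*M := by linarith
      calc (2*M)⁻¹ ≤ (2:ℝ)⁻¹ := inv_anti₀ (by norm_num) this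
          _ = 1/2 := by norm_num
    have hchalf : c ≤ 1/2 := le_trans hcle h2M
    nlinarith [hcM, hMc, hcpos, hchalf,
      mul_le_mul_of_nonneg_right hMc (mul_pos hcpos hcpos).le]
  · -- singular subdifferential
    ext v
    simp only [mem_Ici]
    constructor
    · rintro ⟨xs, vs, ls, hxs, hfxs, hlsp, hls0, hvs, hprod⟩
      have hev : ∀ᶠ k in atTop, 0 ≤ ls k * vs k := by
        have : ∀ᶠ k in atTop, |xs k| < 1/4 := by
          have := hxs (Metric.ball_mem_nhds (0:ℝ) (show (0:ℝ)<1/4 by norm_num))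
          filter_upwards [this] with k hk
          simpa [Real.dist_eq] using hk
        filter_upwards [this] with k hk
        exact mul_nonneg (hlsp k).le (frechet_nonneg f₂ hf₂ hk (hvs k))
      exact ge_of_tendsto hprod hev
    · intro hv
      set xs : ℕ → ℝ := fun k => ((k:ℝ)+1) ^ (-(3/2 : ℝ)) with hxsdef
      have hxpos : ∀ k, 0 < xs k := fun k =>
        Real.rpow_pos_of_pos (by positivity) _
      set vs : ℕ → ℝ := fun k => (1/3 : ℝ) * xs k ^ ((1:ℝ)/3 - 1) with hvsdef
      set ls : ℕ → ℝ := fun k => 3 * (v + xs k ^ ((1:ℝ)/3)) * xs k ^ (1 - (1:ℝ)/3)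
        with hlsdef
      have hxs0 : Tendsto xs atTop (𝓝 0) := by
        have h1 : Tendsto (fun k : ℕ => (k:ℝ)+1) atTop atTop :=
          tendsto_atTop_add_const_right atTop 1 tendsto_natCast_atTop_atTop
        exact (tendsto_rpow_neg_atTop (by norm_num : (0:ℝ) < 3/2)).comp h1
      have hconst : ∀ p : ℝ, 0 < p → Tendsto (fun k => xs k ^ p) atTop (𝓝 0) := by
        intro p hp
        have hc : ContinuousAt (fun x : ℝ => x ^ p) 0 :=
          Real.continuousAt_rpow_const 0 p (Or.inr hp.le)
        have := hc.tendsto.comp hxs0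
        simpa [Function.comp_def, Real.zero_rpow hp.ne'] using this
      have h13 : Tendsto (fun k => xs k ^ ((1:ℝ)/3)) atTop (𝓝 0) :=
        hconst _ (by norm_num)
      have h23 : Tendsto (fun k => xs k ^ (1 - (1:ℝ)/3)) atTop (𝓝 0) :=
        hconst _ (by norm_num)
      refine ⟨xs, vs, ls, hxs0, ?_, ?_, ?_, ?_, ?_⟩
      · -- f₂ (xs k) → f₂ 0
        rw [hf20]
        have heq : ∀ k, f₂ (xs k) = xs k ^ ((1:ℝ)/3) := fun k => by
          rw [hf₂ (xs k), if_pos (hxpos k), cbrt_of_nonneg (hxpos k).le]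
        simpa [heq] using h13
      · -- ls k > 0
        intro k
        have h1 : 0 < v + xs k ^ ((1:ℝ)/3) :=
          add_pos_of_nonneg_of_pos hv (Real.rpow_pos_of_pos (hxpos k) _)
        have h2 : 0 < xs k ^ (1 - (1:ℝ)/3) := Real.rpow_pos_of_pos (hxpos k) _
        have : (0:ℝ) < 3 := by norm_num
        positivity
      · -- ls → 0
        have : Tendsto (fun k => 3 * (v + xs k ^ ((1:ℝ)/3)) * xs k ^ (1 - (1:ℝ)/3))
            atTop (𝓝 (3 * (v + 0) * 0)) :=
          (tendsto_const_nhds.mul (tendsto_const_nhds.add h13)).mul h23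
        rw [hlsdef]
        simpa only [add_zero, mul_zero] using this
      · -- vs k ∈ frechetSubR
        intro k
        exact hasDerivAt_mem_frechet (f2_hasDerivAt f₂ hf₂ (hxpos k))
      · -- ls k * vs k → v
        have heq : ∀ k, ls k * vs k = v + xs k ^ ((1:ℝ)/3) := by
          intro k
          have hbb : xs k ^ (1 - (1:ℝ)/3) * xs k ^ ((1:ℝ)/3 - 1) = 1 := by
            rw [← Real.rpow_add (hxpos k)]
            norm_num
          simp only [hlsdef, hvsdef]
          linear_combination (v + xs k ^ ((1:ℝ)/3)) * hbb
        have : Tendsto (fun k => v + xs k ^ ((1:ℝ)/3)) atTop (𝓝 (v + 0)) :=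
          tendsto_const_nhds.add h13
        simpa [heq] using this
  · -- directional Lipschitz
    refine ⟨0, 1/8, by norm_num, ?_⟩
    intro v z t hvd hzd hfd ht htd
    rw [sub_zero] at hzd
    have hv : v < 0 := by
      have := abs_lt.mp hvd
      linarith [this.2]
    have hz := abs_lt.mp hzd
    have hvlb : -(9/8 : ℝ) < v := by
      have := abs_lt.mp hvd
      linarith [this.1]
    have hstep : -(1/2 : ℝ) < z + t * v := by nlinarith
    have hle : z + t * v ≤ z := by nlinarith
    have := f2_mono f₂ hf₂ hstep hle
    linarith
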